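/- If a diagram D ⊆ [n]×[n] contains two rows i_1 < i_2 and two columns j_1 < j_2 such that boxes (i_1,j_1), (i_1,j_2) are absent from D while (i_2,j_1), (i_2,j_2) are present in D, then one can choose such i_1 < i_2 and j_1 < j_2 'minimally', i.e., additionally satisfying: for every i with i_1 < i < i_2, exactly one of the boxes (i,j_1), (i,j_2) belongs to D. -/
import Mathlib

private lemma aux_min_config {n : ℕ} (D : Fin n → Finset (Fin n)) :
    ∀ k : ℕ, ∀ i₁ i₂ j₁ j₂ : Fin n, (i₂ : ℕ) - i₁ ≤ k → i₁ < i₂ → j₁ < j₂ →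
      i₁ ∉ D j₁ → i₁ ∉ D j₂ → i₂ ∈ D j₁ → i₂ ∈ D j₂ →
      ∃ i₁' i₂' : Fin n, i₁' < i₂' ∧
        i₁' ∉ D j₁ ∧ i₁' ∉ D j₂ ∧ i₂' ∈ D j₁ ∧ i₂' ∈ D j₂ ∧
        ∀ i : Fin n, i₁' < i → i < i₂' → (i ∈ D j₁ ↔ i ∉ D j₂) := by
  intro k
  induction k with
  | zero =>
    intro i₁ i₂ j₁ j₂ hk h12 _ _ _ _ _
    omega
  | succ k ih =>
    intro i₁ i₂ j₁ j₂ hk h12 hj h1a h1b h2a h2b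
    by_cases hmin : ∀ i : Fin n, i₁ < i → i < i₂ → (i ∈ D j₁ ↔ i ∉ D j₂)
    · exact ⟨i₁, i₂, h12, h1a, h1b, h2a, h2b, hmin⟩
    · push_neg at hmin
      obtain ⟨i, hi1, hi2, hbad⟩ := hmin
      by_cases hij : i ∈ D j₁
      · -- then i ∈ D j₂ too (since ¬(mem ↔ ¬mem) with mem means i ∈ D j₂)
        have hij2 : i ∈ D j₂ := by tauto
        exact ih i₁ i j₁ j₂ (by omega) hi1 hj h1a h1b hij hij2
      · have hij2 : i ∉ D j₂ := by tauto
        exact ih i i₂ j₁ j₂ (by omega) hi2 hj hij hij2 h2a h2b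

/-- if a diagram `D` contains the configuration (rows `i₁ < i₂`, columns
`j₁ < j₂` with `(i₁,j₁),(i₁,j₂) ∉ D` and `(i₂,j₁),(i₂,j₂) ∈ D`), then it contains a
minimal one: additionally, for each `i` with `i₁ < i < i₂`, exactly one of `(i,j₁)`,
`(i,j₂)` is in `D`. -/
theorem exists_minimal_configuration {n : ℕ} (D : Fin n → Finset (Fin n))
    (h : ∃ i₁ i₂ j₁ j₂ : Fin n, i₁ < i₂ ∧ j₁ < j₂ ∧
      i₁ ∉ D j₁ ∧ i₁ ∉ D j₂ ∧ i₂ ∈ D j₁ ∧ i₂ ∈ D j₂) :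
    ∃ i₁ i₂ j₁ j₂ : Fin n, i₁ < i₂ ∧ j₁ < j₂ ∧
      i₁ ∉ D j₁ ∧ i₁ ∉ D j₂ ∧ i₂ ∈ D j₁ ∧ i₂ ∈ D j₂ ∧
      ∀ i : Fin n, i₁ < i → i < i₂ → (i ∈ D j₁ ↔ i ∉ D j₂) := by
  obtain ⟨i₁, i₂, j₁, j₂, h12, hj, h1a, h1b, h2a, h2b⟩ := h
  obtain ⟨i₁', i₂', h', h1a', h1b', h2a', h2b', hmin⟩ :=
    aux_min_config D ((i₂ : ℕ) - i₁) i₁ i₂ j₁ j₂ le_rfl h12 hj h1a h1b h2a h2b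
  exact ⟨i₁', i₂', j₁, j₂, h', hj, h1a', h1b', h2a', h2b', hmin⟩
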